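/- Let X be a Tychonoff (completely regular Hausdorff) space. Then X is an s_ℝ-space if and only if there exists a cover 𝓜 of X such that every M ∈ 𝓜 is an s_ℝ-space in its subspace topology and M ∩ M' is dense in X for all M, M' ∈ 𝓜. -/
import Mathlib


open Set Filter Topology

universe u

/-- A function `f : X → ℝ` is sequentially continuous if `f (x n) → f x` whenever a
sequence `(x n)` converges to `x` in `X`. -/
def SeqCont {X : Type*} [TopologicalSpace X] (f : X → ℝ) : Prop :=
  ∀ (u : ℕ → X) (x : X), Tendsto u atTop (nhds x) →
    Tendsto (fun n => f (u n)) atTop (nhds (f x))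

/-- A topological space `X` is an `s_ℝ`-space if every sequentially continuous real-valued
function on `X` is continuous. -/
def IsSRSpace (X : Type*) [TopologicalSpace X] : Prop :=
  ∀ f : X → ℝ, SeqCont f → Continuous f

theorem sR_iff_cover_by_sR_with_dense_intersections
    (X : Type*) [TopologicalSpace X] [CompletelyRegularSpace X] [T2Space X] :
    IsSRSpace X ↔
      ∃ 𝓜 : Set (Set X), (∀ x : X, ∃ M ∈ 𝓜, x ∈ M) ∧
        (∀ M ∈ 𝓜, IsSRSpace M) ∧
        ∀ M ∈ 𝓜, ∀ M' ∈ 𝓜, Dense (M ∩ M') := by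
  constructor
  · intro hX
    refine ⟨{Set.univ}, fun x => ⟨Set.univ, rfl, trivial⟩, ?_, ?_⟩
    · rintro M rfl
      intro f hf
      have hg : SeqCont (fun x : X => f ⟨x, trivial⟩) := by
        intro u x hu
        exact hf (fun n => ⟨u n, trivial⟩) ⟨x, trivial⟩ (tendsto_subtype_rng.mpr hu)
      have := hX _ hg
      have : Continuous (fun m : (Set.univ : Set X) =>
          (fun x : X => f ⟨x, trivial⟩) m.val) := this.comp continuous_subtype_val
      simpa using this
    · rintro M rfl M' rfl
      simp [dense_univ]
  · rintro ⟨𝓜, hcov, hsr, hdense⟩ f hf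
    -- each restriction is continuous
    have hrest : ∀ M ∈ 𝓜, ContinuousOn f M := by
      intro M hM
      rw [continuousOn_iff_continuous_restrict]
      apply hsr M hM
      intro u x hu
      exact hf (fun n => (u n : X)) (x : X)
        (continuous_subtype_val.continuousAt.tendsto.comp hu)
    rw [continuous_iff_continuousAt]
    intro p
    rw [ContinuousAt, Metric.tendsto_nhds]
    intro ε hε
    obtain ⟨M₀, hM₀, hpM₀⟩ := hcov p
    have h₀ : Tendsto f (𝓝[M₀] p) (𝓝 (f p)) := hrest M₀ hM₀ p hpM₀
    have hball : {y : X | dist (f y) (f p) < ε / 3} ∈ 𝓝[M₀] p :=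
      h₀ (Metric.ball_mem_nhds _ (by linarith))
    rw [mem_nhdsWithin] at hball
    obtain ⟨U₀, hU₀open, hpU₀, hU₀⟩ := hball
    refine Filter.eventually_of_mem (hU₀open.mem_nhds hpU₀) ?_
    intro x hxU₀
    obtain ⟨M₁, hM₁, hxM₁⟩ := hcov x
    have h₁ : Tendsto f (𝓝[M₁] x) (𝓝 (f x)) := hrest M₁ hM₁ x hxM₁
    have hball₁ : {y : X | dist (f y) (f x) < ε / 3} ∈ 𝓝[M₁] x :=
      h₁ (Metric.ball_mem_nhds _ (by linarith))
    rw [mem_nhdsWithin] at hball₁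
    obtain ⟨V₁, hV₁open, hxV₁, hV₁⟩ := hball₁
    have hVU : IsOpen (V₁ ∩ U₀) := hV₁open.inter hU₀open
    have hne : (V₁ ∩ U₀).Nonempty := ⟨x, hxV₁, hxU₀⟩
    obtain ⟨y, hyVU, hyMM⟩ := (hdense M₀ hM₀ M₁ hM₁).inter_open_nonempty _ hVU hne
    have h1 : dist (f y) (f p) < ε / 3 := hU₀ ⟨hyVU.2, hyMM.1⟩
    have h2 : dist (f y) (f x) < ε / 3 := hV₁ ⟨hyVU.1, hyMM.2⟩
    calc dist (f x) (f p) ≤ dist (f x) (f y) + dist (f y) (f p) := dist_triangle _ _ _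
      _ < ε := by rw [dist_comm (f x) (f y)]; linarith
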